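/- For any graph G, c(G) = 1 if and only if d_min(G) = 1. -/

import Mathlib

variable {V : Type*}

/-- An orientation of a simple graph `G`: each edge gets exactly one direction. -/
structure Orient (G : SimpleGraph V) where
  dir : V → V → Prop
  dir_adj : ∀ u v, dir u v → G.Adj u v
  adj_dir : ∀ u v, G.Adj u v → dir u v ∨ dir v u
  asymm : ∀ u v, dir u v → ¬ dir v u

/-- The relation obtained from `dir` by reversing the single arc `u → v`. -/
def reverseArc (dir : V → V → Prop) (u v : V) : V → V → Prop :=
  fun a b => (dir a b ∧ ¬(a = u ∧ b = v)) ∨ (a = v ∧ b = u)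

/-- A relation is acyclic if there is no directed cycle. -/
def IsAcyclicRel (dir : V → V → Prop) : Prop :=
  ∀ u v, dir u v → ¬ Relation.ReflTransGen dir v u

/-- An arc `u → v` is dependent if its reversal creates a directed cycle. -/
def DependentArc (dir : V → V → Prop) (u v : V) : Prop :=
  dir u v ∧ ¬ IsAcyclicRel (reverseArc dir u v)

/-- A cover graph admits an acyclic orientation with no dependent arcs. -/
def IsCoverGraph (G : SimpleGraph V) : Prop :=
  ∃ D : Orient G, IsAcyclicRel D.dir ∧ ∀ u v, ¬ DependentArc D.dir u v

/-- The number of dependent arcs of an orientation. -/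
noncomputable def numDependent {G : SimpleGraph V} (D : Orient G) : ℕ :=
  Set.ncard {p : V × V | DependentArc D.dir p.1 p.2}

/-- `d_min`: minimum number of dependent arcs over all acyclic orientations. -/
noncomputable def dmin (G : SimpleGraph V) : ℕ :=
  sInf {n | ∃ D : Orient G, IsAcyclicRel D.dir ∧ numDependent D = n}

/-- `d_max`: maximum number of dependent arcs over all acyclic orientations. -/
noncomputable def dmax (G : SimpleGraph V) : ℕ :=
  sSup {n | ∃ D : Orient G, IsAcyclicRel D.dir ∧ numDependent D = n}

/-- `c(G)`: minimum number of edges to delete from `G` to get a cover graph. -/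
noncomputable def coverDeletion (G : SimpleGraph V) : ℕ :=
  sInf {n | ∃ F : Set (Sym2 V), F ⊆ G.edgeSet ∧ IsCoverGraph (G.deleteEdges F) ∧ F.ncard = n}

/-- The generalized Mycielski graph `M_m(G)`; `none` is the apex `u`,
`some (i, a)` is the vertex `⟨i, a⟩`. -/
def genMycielski (G : SimpleGraph V) (m : ℕ) : SimpleGraph (Option (Fin (m + 1) × V)) where
  Adj x y :=
    match x, y with
    | some (i, a), some (j, b) =>
        G.Adj a b ∧ ((i = j ∧ (i : ℕ) = 0) ∨ (i : ℕ) + 1 = (j : ℕ) ∨ (j : ℕ) + 1 = (i : ℕ))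
    | some (i, _), none => (i : ℕ) = m
    | none, some (j, _) => (j : ℕ) = m
    | none, none => False
  symm := by
    refine ⟨?_⟩
    rintro (_ | ⟨i, a⟩) (_ | ⟨j, b⟩) h
    · exact h
    · exact h
    · exact h
    · refine ⟨h.1.symm, ?_⟩
      rcases h.2 with ⟨h1, h2⟩ | h' | h'
      · exact Or.inl ⟨h1.symm, h1 ▸ h2⟩
      · exact Or.inr (Or.inr h')
      · exact Or.inr (Or.inl h')
  loopless := by
    refine ⟨?_⟩
    rintro (_ | ⟨i, a⟩) h <;> simp_all

def addArc (R : V → V → Prop) (x y : V) : V → V → Prop :=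
  fun a b => R a b ∨ (a = x ∧ b = y)

def delArc (R : V → V → Prop) (x y : V) : V → V → Prop :=
  fun a b => R a b ∧ ¬(a = x ∧ b = y)

lemma reverseArc_eq (R : V → V → Prop) (u v : V) :
    reverseArc R u v = addArc (delArc R u v) v u := rfl

lemma notAcyclic_iff {R : V → V → Prop} :
    ¬ IsAcyclicRel R ↔ ∃ u v, R u v ∧ Relation.ReflTransGen R v u := by
  simp [IsAcyclicRel]

lemma IsAcyclicRel.no_transGen {R : V → V → Prop} (h : IsAcyclicRel R) (a : V) :
    ¬ Relation.TransGen R a a := by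
  intro ht
  obtain ⟨b, hb, hba⟩ := (Relation.TransGen.tail'_iff).mp ht
  exact h b a hba hb

lemma IsAcyclicRel.antisymm {R : V → V → Prop} (h : IsAcyclicRel R) {a b : V}
    (hab : Relation.ReflTransGen R a b) (hba : Relation.ReflTransGen R b a) : a = b := by
  rcases hab.cases_head with rfl | ⟨c, hac, hcb⟩
  · rfl
  · exact absurd (hcb.trans hba) (h a c hac)

lemma rtg_addArc {R : V → V → Prop} {x y p q : V}
    (h : Relation.ReflTransGen (addArc R x y) p q) :
    Relation.ReflTransGen R p q ∨
      (Relation.ReflTransGen R p x ∧ Relation.ReflTransGen R y q) := by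
  induction h using Relation.ReflTransGen.head_induction_on with
  | refl => exact Or.inl .refl
  | head hac _ ih =>
    rcases hac with hR | ⟨rfl, rfl⟩
    · rcases ih with h1 | ⟨h1, h2⟩
      · exact Or.inl (Relation.ReflTransGen.head hR h1)
      · exact Or.inr ⟨Relation.ReflTransGen.head hR h1, h2⟩
    · rcases ih with h1 | ⟨_, h2⟩
      · exact Or.inr ⟨.refl, h1⟩
      · exact Or.inr ⟨.refl, h2⟩

theorem Relation.ReflTransGen.monoOld {α : Type*} {r p : α → α → Prop} {a b : α}
    (h : Relation.ReflTransGen r a b) (f : ∀ a b, r a b → p a b) :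
    Relation.ReflTransGen p a b :=
  Relation.ReflTransGen.mono f a b h

lemma rtg_delArc {R : V → V → Prop} {x y p q : V} (hac : IsAcyclicRel R) (hR : R x y)
    (h : Relation.ReflTransGen R p q) :
    Relation.ReflTransGen (delArc R x y) p q ∨
      (Relation.ReflTransGen (delArc R x y) p x ∧ Relation.ReflTransGen (delArc R x y) y q) := by
  induction h using Relation.ReflTransGen.head_induction_on with
  | refl => exact Or.inl .refl
  | head hac' _ ih =>
    rename_i a c _
    by_cases hax : a = x ∧ c = y
    · obtain ⟨rfl, rfl⟩ := hax
      rcases ih with h1 | ⟨h1, h2⟩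
      · exact Or.inr ⟨.refl, h1⟩
      · exact absurd (h1.monoOld fun a b hb => hb.1) (hac _ _ hR)
    · rcases ih with h1 | ⟨h1, h2⟩
      · exact Or.inl (Relation.ReflTransGen.head ⟨hac', hax⟩ h1)
      · exact Or.inr ⟨Relation.ReflTransGen.head ⟨hac', hax⟩ h1, h2⟩

lemma rtg_avoid_sink {R : V → V → Prop} {z p q : V} (hsink : ∀ w, ¬ R z w)
    (h : Relation.ReflTransGen R p q) (hq : q ≠ z) :
    Relation.ReflTransGen (fun a b => R a b ∧ b ≠ z) p q := by
  revert hq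
  induction h with
  | refl => exact fun _ => .refl
  | tail hpb hbc ih =>
    rename_i b c
    intro hq
    have hbz : b ≠ z := fun hbz => hsink c (hbz ▸ hbc)
    exact Relation.ReflTransGen.tail (ih hbz) ⟨hbc, hq⟩

lemma delArc_le {R : V → V → Prop} {x y : V} : ∀ a b, delArc R x y a b → R a b :=
  fun _ _ h => h.1

lemma caseA {G : SimpleGraph V} {x y : V} (hxy : G.Adj x y)
    (DH : Orient (G.deleteEdges {s(x,y)})) (hac : IsAcyclicRel DH.dir)
    (hdf : ∀ u v, ¬ DependentArc DH.dir u v)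
    (hcmp : Relation.ReflTransGen DH.dir x y) :
    ∃ D : Orient G, IsAcyclicRel D.dir ∧ ∀ a b, DependentArc D.dir a b → a = x ∧ b = y := by
  classical
  set R := DH.dir with hRdef
  have hRadj : ∀ a b, R a b → G.Adj a b := fun a b h => by
    have := DH.dir_adj a b h
    rw [SimpleGraph.deleteEdges_adj] at this
    exact this.1
  have hnxy : ¬ R x y := fun h => by
    have := DH.dir_adj x y h
    simp [SimpleGraph.deleteEdges_adj] at this
  have hnyx : ¬ R y x := fun h => by
    have := DH.dir_adj y x h
    simp [SimpleGraph.deleteEdges_adj, Sym2.eq_swap] at this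
  have hne : x ≠ y := hxy.ne
  have hacD : IsAcyclicRel (addArc R x y) := by
    rintro a b (hR | ⟨rfl, rfl⟩) hba
    · rcases rtg_addArc hba with h1 | ⟨h1, h2⟩
      · exact hac a b hR h1
      · exact hac.no_transGen a (Relation.TransGen.head' hR ((h1.trans hcmp).trans h2))
    · rcases rtg_addArc hba with h1 | ⟨h1, h2⟩
      · exact hne (hac.antisymm hcmp h1)
      · exact hne (hac.antisymm hcmp h1)
  refine ⟨⟨addArc R x y, ?_, ?_, ?_⟩, hacD, ?_⟩
  · rintro a b (h | ⟨rfl, rfl⟩)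
    · exact hRadj a b h
    · exact hxy
  · intro a b hab
    by_cases hs : s(a, b) = s(x, y)
    · rcases Sym2.eq_iff.mp hs with ⟨rfl, rfl⟩ | ⟨rfl, rfl⟩
      · exact Or.inl (Or.inr ⟨rfl, rfl⟩)
      · exact Or.inr (Or.inr ⟨rfl, rfl⟩)
    · have hdel : (G.deleteEdges {s(x, y)}).Adj a b := by
        rw [SimpleGraph.deleteEdges_adj]
        exact ⟨hab, by simpa using hs⟩
      rcases DH.adj_dir a b hdel with h | h
      · exact Or.inl (Or.inl h)
      · exact Or.inr (Or.inl h)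
  · rintro a b (h | ⟨rfl, rfl⟩) (h' | ⟨h1, h2⟩)
    · exact DH.asymm a b h h'
    · exact hnyx (h1 ▸ h2 ▸ h)
    · exact hnyx h'
    · exact hne h1.symm
  · intro a b hdep
    by_contra hnab
    obtain ⟨hdir, hnacQ⟩ := hdep
    have hRab : R a b := by
      rcases hdir with h | ⟨rfl, rfl⟩
      · exact h
      · exact absurd ⟨rfl, rfl⟩ hnab
    have hR0 : IsAcyclicRel (reverseArc R a b) := by
      by_contra h
      exact hdf a b ⟨hRab, h⟩
    have key : ¬ Relation.ReflTransGen (reverseArc R a b) y x := by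
      intro hyx
      rw [reverseArc_eq] at hyx
      rcases rtg_addArc hyx with h1 | ⟨h1, h2⟩
      · exact hne (hac.antisymm hcmp (h1.monoOld delArc_le))
      · rcases rtg_delArc hac hRab hcmp with hB1 | ⟨hB2a, hB2b⟩
        · have habchain : Relation.ReflTransGen (delArc R a b) a b := (h2.trans hB1).trans h1
          exact hR0 b a (Or.inr ⟨rfl, rfl⟩) (habchain.monoOld fun p q h => Or.inl h)
        · have hxa : x = a := hac.antisymm (hB2a.monoOld delArc_le) (h2.monoOld delArc_le)
          have hby : b = y := hac.antisymm (hB2b.monoOld delArc_le) (h1.monoOld delArc_le)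
          exact hnab ⟨hxa.symm, hby⟩
    apply hnacQ
    have hQiff : ∀ p q, reverseArc (addArc R x y) a b p q ↔ addArc (reverseArc R a b) x y p q := by
      intro p q
      constructor
      · rintro (⟨h | ⟨rfl, rfl⟩, hne'⟩ | ⟨rfl, rfl⟩)
        · exact Or.inl (Or.inl ⟨h, hne'⟩)
        · exact Or.inr ⟨rfl, rfl⟩
        · exact Or.inl (Or.inr ⟨rfl, rfl⟩)
      · rintro ((⟨h, hne'⟩ | ⟨rfl, rfl⟩) | ⟨rfl, rfl⟩)
        · exact Or.inl ⟨Or.inl h, hne'⟩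
        · exact Or.inr ⟨rfl, rfl⟩
        · exact Or.inl ⟨Or.inr ⟨rfl, rfl⟩, fun hh => hnab ⟨hh.1.symm, hh.2.symm⟩⟩
    intro p q hpq hqp
    have hpq' := (hQiff p q).mp hpq
    have hqp' : Relation.ReflTransGen (addArc (reverseArc R a b) x y) q p :=
      hqp.monoOld fun u v h => (hQiff u v).mp h
    rcases rtg_addArc hqp' with h1 | ⟨h1, h2⟩
    · rcases hpq' with hR0pq | ⟨rfl, rfl⟩
      · exact hR0 p q hR0pq h1
      · exact key h1
    · rcases hpq' with hR0pq | ⟨rfl, rfl⟩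
      · exact key ((h2.trans (Relation.ReflTransGen.single hR0pq)).trans h1)
      · exact key h1

lemma rtg_reachable {H : SimpleGraph V} {R : V → V → Prop} (hadj : ∀ a b, R a b → H.Adj a b)
    {p q : V} (h : Relation.ReflTransGen R p q) : H.Reachable p q := by
  induction h with
  | refl => exact SimpleGraph.Reachable.refl p
  | tail hpb hbc ih => exact ih.trans (hadj _ _ hbc).reachable

lemma caseDisc {G : SimpleGraph V} {x y : V} (hxy : G.Adj x y)
    (DH : Orient (G.deleteEdges {s(x,y)})) (hac : IsAcyclicRel DH.dir)
    (hdf : ∀ u v, ¬ DependentArc DH.dir u v)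
    (hnr : ¬ (G.deleteEdges {s(x,y)}).Reachable x y) :
    IsCoverGraph G := by
  classical
  set R := DH.dir with hRdef
  have hHadj : ∀ a b, R a b → (G.deleteEdges {s(x,y)}).Adj a b := DH.dir_adj
  have hRadj : ∀ a b, R a b → G.Adj a b := fun a b h => by
    have := DH.dir_adj a b h
    rw [SimpleGraph.deleteEdges_adj] at this
    exact this.1
  have hnxy : ¬ R x y := fun h => by
    have := DH.dir_adj x y h
    simp [SimpleGraph.deleteEdges_adj] at this
  have hnyx : ¬ R y x := fun h => by
    have := DH.dir_adj y x h
    simp [SimpleGraph.deleteEdges_adj, Sym2.eq_swap] at this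
  have hne : x ≠ y := hxy.ne
  have hnRxy : ¬ Relation.ReflTransGen R x y := fun h => hnr (rtg_reachable hHadj h)
  have hnRyx : ¬ Relation.ReflTransGen R y x := fun h => hnr (rtg_reachable hHadj h).symm
  have hacD : IsAcyclicRel (addArc R x y) := by
    rintro a b (hR | ⟨rfl, rfl⟩) hba
    · rcases rtg_addArc hba with h1 | ⟨h1, h2⟩
      · exact hac a b hR h1
      · exact hnRyx ((h2.trans (Relation.ReflTransGen.single hR)).trans h1)
    · rcases rtg_addArc hba with h1 | ⟨h1, h2⟩
      · exact hnRyx h1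
      · exact hnRyx h1
  refine ⟨⟨addArc R x y, ?_, ?_, ?_⟩, hacD, ?_⟩
  · rintro a b (h | ⟨rfl, rfl⟩)
    · exact hRadj a b h
    · exact hxy
  · intro a b hab
    by_cases hs : s(a, b) = s(x, y)
    · rcases Sym2.eq_iff.mp hs with ⟨rfl, rfl⟩ | ⟨rfl, rfl⟩
      · exact Or.inl (Or.inr ⟨rfl, rfl⟩)
      · exact Or.inr (Or.inr ⟨rfl, rfl⟩)
    · have hdel : (G.deleteEdges {s(x, y)}).Adj a b := by
        rw [SimpleGraph.deleteEdges_adj]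
        exact ⟨hab, by simpa using hs⟩
      rcases DH.adj_dir a b hdel with h | h
      · exact Or.inl (Or.inl h)
      · exact Or.inr (Or.inl h)
  · rintro a b (h | ⟨rfl, rfl⟩) (h' | ⟨h1, h2⟩)
    · exact DH.asymm a b h h'
    · exact hnyx (h1 ▸ h2 ▸ h)
    · exact hnyx h'
    · exact hne h1.symm
  · intro u v hdep
    obtain ⟨hdir, hnacQ⟩ := hdep
    apply hnacQ
    rcases hdir with hRuv | ⟨rfl, rfl⟩
    · -- u v is an R-arc
      have hnab : ¬(u = x ∧ v = y) := fun hh => hnxy (hh.1 ▸ hh.2 ▸ hRuv)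
      have hR0 : IsAcyclicRel (reverseArc R u v) := by
        by_contra h
        exact hdf u v ⟨hRuv, h⟩
      have key : ¬ Relation.ReflTransGen (reverseArc R u v) y x := by
        intro hyx
        rw [reverseArc_eq] at hyx
        rcases rtg_addArc hyx with h1 | ⟨h1, h2⟩
        · exact hnRyx (h1.monoOld delArc_le)
        · exact hnr ((rtg_reachable hHadj (h1.monoOld delArc_le)).trans
            (((hHadj u v hRuv).reachable.symm).trans
              (rtg_reachable hHadj (h2.monoOld delArc_le)))).symm
      have hQiff : ∀ p q, reverseArc (addArc R x y) u v p q ↔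
          addArc (reverseArc R u v) x y p q := by
        intro p q
        constructor
        · rintro (⟨h | ⟨rfl, rfl⟩, hne'⟩ | ⟨rfl, rfl⟩)
          · exact Or.inl (Or.inl ⟨h, hne'⟩)
          · exact Or.inr ⟨rfl, rfl⟩
          · exact Or.inl (Or.inr ⟨rfl, rfl⟩)
        · rintro ((⟨h, hne'⟩ | ⟨rfl, rfl⟩) | ⟨rfl, rfl⟩)
          · exact Or.inl ⟨Or.inl h, hne'⟩
          · exact Or.inr ⟨rfl, rfl⟩
          · exact Or.inl ⟨Or.inr ⟨rfl, rfl⟩, fun hh => hnab ⟨hh.1.symm, hh.2.symm⟩⟩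
      intro p q hpq hqp
      have hpq' := (hQiff p q).mp hpq
      have hqp' : Relation.ReflTransGen (addArc (reverseArc R u v) x y) q p :=
        hqp.monoOld fun a b h => (hQiff a b).mp h
      rcases rtg_addArc hqp' with h1 | ⟨h1, h2⟩
      · rcases hpq' with hR0pq | ⟨rfl, rfl⟩
        · exact hR0 p q hR0pq h1
        · exact key h1
      · rcases hpq' with hR0pq | ⟨rfl, rfl⟩
        · exact key ((h2.trans (Relation.ReflTransGen.single hR0pq)).trans h1)
        · exact key h1
    · -- the arc (x,y) itself
      have hQiff : ∀ p q, reverseArc (addArc R u v) u v p q ↔ addArc R v u p q := by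
        intro p q
        constructor
        · rintro (⟨h | ⟨rfl, rfl⟩, hne'⟩ | ⟨rfl, rfl⟩)
          · exact Or.inl h
          · exact absurd ⟨rfl, rfl⟩ hne'
          · exact Or.inr ⟨rfl, rfl⟩
        · rintro (h | ⟨rfl, rfl⟩)
          · exact Or.inl ⟨Or.inl h, fun hh => hnxy (hh.1 ▸ hh.2 ▸ h)⟩
          · exact Or.inr ⟨rfl, rfl⟩
      intro p q hpq hqp
      have hpq' := (hQiff p q).mp hpq
      have hqp' : Relation.ReflTransGen (addArc R v u) q p :=
        hqp.monoOld fun a b h => (hQiff a b).mp h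
      rcases rtg_addArc hqp' with h1 | ⟨h1, h2⟩
      · rcases hpq' with hRpq | ⟨rfl, rfl⟩
        · exact hac p q hRpq h1
        · exact hnRxy h1
      · rcases hpq' with hRpq | ⟨rfl, rfl⟩
        · exact hnRxy ((h2.trans (Relation.ReflTransGen.single hRpq)).trans h1)
        · exact hnRxy h1

def pushRel (R : V → V → Prop) (z : V) : V → V → Prop :=
  fun a b => (R a b ∧ a ≠ z) ∨ (b = z ∧ R z a)

lemma push {H : SimpleGraph V} (DH : Orient H) (hac : IsAcyclicRel DH.dir)
    (hdf : ∀ u v, ¬ DependentArc DH.dir u v) (z : V) (hz : ∀ a, ¬ DH.dir a z) :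
    ∃ DH' : Orient H, DH'.dir = pushRel DH.dir z ∧ IsAcyclicRel DH'.dir ∧
      ∀ u v, ¬ DependentArc DH'.dir u v := by
  classical
  set R := DH.dir with hRdef
  have hirr : ∀ a, ¬ R a a := fun a h => H.loopless.irrefl a (DH.dir_adj a a h)
  have hsink : ∀ b, ¬ pushRel R z z b := by
    rintro b (⟨_, hzz⟩ | ⟨_, hzz⟩)
    · exact hzz rfl
    · exact hirr z hzz
  have hacR' : IsAcyclicRel (pushRel R z) := by
    rintro a b (⟨hR, haz⟩ | ⟨rfl, hRza⟩) hba
    · have := (rtg_avoid_sink hsink hba haz).monoOld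
        (fun p q hpq => by
          rcases hpq with ⟨(⟨h, _⟩ | ⟨rfl, _⟩), hqz⟩
          · exact h
          · exact absurd rfl hqz)
      exact hac a b hR this
    · rcases hba.cases_head with heq | ⟨c, hzc, _⟩
      · exact hirr b (heq ▸ hRza)
      · exact hsink c hzc
  refine ⟨⟨pushRel R z, ?_, ?_, ?_⟩, rfl, hacR', ?_⟩
  · rintro a b (⟨h, _⟩ | ⟨rfl, h⟩)
    · exact DH.dir_adj a b h
    · exact (DH.dir_adj b a h).symm
  · intro a b hab
    by_cases haz : a = z
    · subst haz
      rcases DH.adj_dir a b hab with h | h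
      · exact Or.inr (Or.inr ⟨rfl, h⟩)
      · exact absurd h (hz b)
    · by_cases hbz : b = z
      · subst hbz
        rcases DH.adj_dir a b hab with h | h
        · exact absurd h (hz a)
        · exact Or.inl (Or.inr ⟨rfl, h⟩)
      · rcases DH.adj_dir a b hab with h | h
        · exact Or.inl (Or.inl ⟨h, haz⟩)
        · exact Or.inr (Or.inl ⟨h, hbz⟩)
  · rintro a b (⟨h, haz⟩ | ⟨rfl, h⟩) (⟨h', hbz⟩ | ⟨heq, h'⟩)
    · exact DH.asymm a b h h'
    · exact haz heq
    · exact hbz rfl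
    · exact hirr b h'
  · intro u v hdep
    obtain ⟨huv, hnacQ⟩ := hdep
    apply hnacQ
    rcases huv with ⟨hRuv, huz⟩ | ⟨rfl, hRzu⟩
    · -- case v ≠ z
      have hvz : v ≠ z := fun h => hz u (h ▸ hRuv)
      intro p q hpq hqp
      have hQsink : ∀ b, ¬ reverseArc (pushRel R z) u v z b := by
        rintro b (⟨hR'zb, _⟩ | ⟨hzv, _⟩)
        · exact hsink b hR'zb
        · exact hvz hzv.symm
      have hpz : p ≠ z := fun h => hQsink q (h ▸ hpq)
      by_cases hqz : q = z
      · subst hqz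
        rcases hqp.cases_head with heq | ⟨c, hc, _⟩
        · subst heq
          exact hQsink _ hpq
        · exact hQsink c hc
      · have hmap : ∀ a b, (fun a b => reverseArc (pushRel R z) u v a b ∧ b ≠ z) a b →
            reverseArc R u v a b := by
          rintro a b ⟨hQ, hbz⟩
          rcases hQ with ⟨hR'ab, hne'⟩ | ⟨ha, hb⟩
          · rcases hR'ab with ⟨hR, _⟩ | ⟨rfl, _⟩
            · exact Or.inl ⟨hR, hne'⟩
            · exact absurd rfl hbz
          · exact Or.inr ⟨ha, hb⟩
        have hpq₀ := hmap p q ⟨hpq, hqz⟩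
        have hqp₀ := (rtg_avoid_sink hQsink hqp hpz).monoOld hmap
        exact hdf u v ⟨hRuv, fun hA => hA p q hpq₀ hqp₀⟩
    · -- case v = v
      have huz' : u ≠ v := fun h => hirr v (h ▸ hRzu)
      set B : V → V → Prop := fun p q => pushRel R v p q ∧ ¬(p = u ∧ q = v) with hBdef
      have hBsub : ∀ p q, B p q → pushRel R v p q := fun _ _ h => h.1
      have hBsink : ∀ b, ¬ B v b := fun b h => hsink b h.1
      intro p q hpq hqp
      have hpq' : addArc B v u p q := by
        rcases hpq with ⟨h, hne'⟩ | ⟨rfl, rfl⟩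
        · exact Or.inl ⟨h, hne'⟩
        · exact Or.inr ⟨rfl, rfl⟩
      have hqp' : Relation.ReflTransGen (addArc B v u) q p := by
        refine hqp.monoOld fun a b h => ?_
        rcases h with ⟨h, hne'⟩ | ⟨ha, hb⟩
        · exact Or.inl ⟨h, hne'⟩
        · exact Or.inr ⟨ha, hb⟩
      have hBuz : Relation.ReflTransGen B u v := by
        rcases rtg_addArc hqp' with h1 | ⟨h1, h2⟩
        · rcases hpq' with hB | ⟨rfl, rfl⟩
          · exact absurd (h1.monoOld hBsub) (hacR' p q (hBsub p q hB))
          · exact h1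
        · rcases hpq' with hB | ⟨rfl, rfl⟩
          · exact (h2.trans (Relation.ReflTransGen.single hB)).trans h1
          · exact h1
      rcases hBuz.cases_tail with heq | ⟨w, hBuw, hBwz⟩
      · exact huz' heq.symm
      · obtain ⟨hR'wz, hnwu⟩ := hBwz
        have hRzw : R v w := by
          rcases hR'wz with ⟨hRwz, _⟩ | ⟨_, h⟩
          · exact absurd hRwz (hz w)
          · exact h
        have hwu : w ≠ u := fun hh => hnwu ⟨hh, rfl⟩
        have hwz : w ≠ v := fun hh => hirr v (hh ▸ hRzw)
        have hcyc : Relation.ReflTransGen (reverseArc R v w) v w := by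
          have step1 : reverseArc R v w v u :=
            Or.inl ⟨hRzu, fun hh => hwu hh.2.symm⟩
          have hpath : Relation.ReflTransGen (reverseArc R v w) u w :=
            (rtg_avoid_sink hBsink hBuw hwz).monoOld
            (fun a b hab => by
              rcases hab with ⟨⟨hR'ab, _⟩, hbz⟩
              rcases hR'ab with ⟨hRab, hazn⟩ | ⟨rfl, _⟩
              · exact Or.inl ⟨hRab, fun hh => hazn hh.1⟩
              · exact absurd rfl hbz)
          exact Relation.ReflTransGen.head step1 hpath
        exact hdf v w ⟨hRzw, fun hA => hA w v (Or.inr ⟨rfl, rfl⟩) hcyc⟩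

inductive CostWalk (R : V → V → Prop) (y : V) : V → ℕ → Prop
  | refl : CostWalk R y y 0
  | stepF {v w c} : CostWalk R y v c → R v w → CostWalk R y w c
  | stepB {v w c} : CostWalk R y v c → R w v → CostWalk R y w (c + 1)

noncomputable def costVal (R : V → V → Prop) (y v : V) : ℕ :=
  sInf {c | CostWalk R y v c}

noncomputable def potential [Fintype V] (R : V → V → Prop) (y : V) : ℕ :=
  ∑ v : V, costVal R y v

lemma cw_reachable {H : SimpleGraph V} {R : V → V → Prop} {y v : V} {c : ℕ}
    (hadj : ∀ a b, R a b → H.Adj a b) (h : CostWalk R y v c) : H.Reachable y v := by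
  induction h with
  | refl => exact SimpleGraph.Reachable.refl y
  | stepF _ hR ih => exact ih.trans (hadj _ _ hR).reachable
  | stepB _ hR ih => exact ih.trans ((hadj _ _ hR).reachable).symm

lemma cw_exists {H : SimpleGraph V} {R : V → V → Prop}
    (hdir : ∀ a b, H.Adj a b → R a b ∨ R b a) {y : V} :
    ∀ {v : V}, H.Walk v y → ∃ c, CostWalk R y v c := by
  intro v p
  induction p with
  | nil => exact ⟨0, .refl⟩
  | cons h q ih =>
    obtain ⟨c, hc⟩ := ih
    rename_i a b _
    rcases hdir _ _ h with hF | hB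
    · exact ⟨c + 1, .stepB hc hF⟩
    · exact ⟨c, .stepF hc hB⟩

lemma cw_push {R : V → V → Prop} {y z v : V} {c : ℕ}
    (hz : ∀ a, ¬ R a z) (hirr : ∀ a, ¬ R a a) (hyz : y ≠ z)
    (h : CostWalk R y v c) :
    (v ≠ z ∧ CostWalk (pushRel R z) y v c) ∨
      (v = z ∧ ∃ c', c = c' + 1 ∧ CostWalk (pushRel R z) y z c') := by
  induction h with
  | refl => exact Or.inl ⟨hyz, .refl⟩
  | stepF hcw hR ih =>
    rename_i v' w' c'
    rcases ih with ⟨hvz, hcw'⟩ | ⟨rfl, c'', rfl, hcw'⟩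
    · by_cases hwz : w' = z
      · exact absurd (hwz ▸ hR) (hz v')
      · exact Or.inl ⟨hwz, .stepF hcw' (Or.inl ⟨hR, hvz⟩)⟩
    · have hwz : w' ≠ v' := fun hh => hirr v' (hh ▸ hR)
      exact Or.inl ⟨hwz, .stepB hcw' (Or.inr ⟨rfl, hR⟩)⟩
  | stepB hcw hR ih =>
    rename_i v' w' c'
    rcases ih with ⟨hvz, hcw'⟩ | ⟨rfl, c'', rfl, hcw'⟩
    · by_cases hwz : w' = z
      · subst hwz
        exact Or.inr ⟨rfl, c', rfl, .stepF hcw' (Or.inr ⟨rfl, hR⟩)⟩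
      · exact Or.inl ⟨hwz, .stepB hcw' (Or.inl ⟨hR, hwz⟩)⟩
    · exact absurd hR (hz w')

lemma potential_push_lt [Fintype V] {H : SimpleGraph V} {R : V → V → Prop} {y z : V}
    (hadj : ∀ a b, R a b → H.Adj a b) (hdir : ∀ a b, H.Adj a b → R a b ∨ R b a)
    (hirr : ∀ a, ¬ R a a) (hz : ∀ a, ¬ R a z) (hyz : y ≠ z)
    (hreach : H.Reachable y z) :
    potential (pushRel R z) y < potential R y := by
  classical
  have hadj' : ∀ a b, pushRel R z a b → H.Adj a b := by
    rintro a b (⟨h, _⟩ | ⟨rfl, h⟩)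
    · exact hadj a b h
    · exact (hadj _ _ h).symm
  have hle : ∀ v, costVal (pushRel R z) y v ≤ costVal R y v := by
    intro v
    by_cases hne : {c | CostWalk R y v c}.Nonempty
    · have hmem := Nat.sInf_mem hne
      rcases cw_push hz hirr hyz hmem with ⟨_, hcw⟩ | ⟨rfl, c', heq, hcw⟩
      · exact Nat.sInf_le hcw
      · have h1 : costVal (pushRel R v) y v ≤ c' := Nat.sInf_le hcw
        have h2 : costVal R y v = c' + 1 := heq
        omega
    · have h2 : ¬ {c | CostWalk (pushRel R z) y v c}.Nonempty := by
        rintro ⟨c, hc⟩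
        have hr : H.Reachable y v := cw_reachable hadj' hc
        obtain ⟨p⟩ := hr.symm
        exact hne (cw_exists hdir p)
      rw [Set.not_nonempty_iff_eq_empty] at hne h2
      rw [costVal, costVal, hne, h2]
  have hzne : {c | CostWalk R y z c}.Nonempty := by
    obtain ⟨p⟩ := hreach.symm
    exact cw_exists hdir p
  have hmemz := Nat.sInf_mem hzne
  rcases cw_push hz hirr hyz hmemz with ⟨hne', _⟩ | ⟨_, c', heq, hcw⟩
  · exact absurd rfl hne'
  · have hlt : costVal (pushRel R z) y z < costVal R y z := by
      have h1 : costVal (pushRel R z) y z ≤ c' := Nat.sInf_le hcw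
      have h2 : costVal R y z = c' + 1 := heq
      omega
    exact Finset.sum_lt_sum (fun i _ => hle i) ⟨z, Finset.mem_univ z, hlt⟩

lemma push_or_done [Fintype V] {H : SimpleGraph V} (y : V) (DH : Orient H)
    (hac : IsAcyclicRel DH.dir) (hdf : ∀ u v, ¬ DependentArc DH.dir u v) :
    (∀ v, H.Reachable y v → Relation.ReflTransGen DH.dir y v) ∨
    ∃ DH' : Orient H, IsAcyclicRel DH'.dir ∧ (∀ u v, ¬ DependentArc DH'.dir u v) ∧
      potential DH'.dir y < potential DH.dir y := by
  classical
  by_cases hdone : ∀ v, H.Reachable y v → Relation.ReflTransGen DH.dir y v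
  · exact Or.inl hdone
  · push_neg at hdone
    obtain ⟨v0, hre0, hnr0⟩ := hdone
    set R := DH.dir with hR
    set Uf : Finset V := Finset.univ.filter
      (fun u => H.Reachable y u ∧ ¬ Relation.ReflTransGen R y u) with hUf
    have hv0 : v0 ∈ Uf := by
      rw [hUf, Finset.mem_filter]
      exact ⟨Finset.mem_univ v0, hre0, hnr0⟩
    obtain ⟨z, hzU, hzmin⟩ := Finset.exists_min_image Uf
      (fun u => (Uf.filter (fun a => Relation.ReflTransGen R a u)).card) ⟨v0, hv0⟩
    have hzre : H.Reachable y z := ((Finset.mem_filter.mp hzU).2).1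
    have hznr : ¬ Relation.ReflTransGen R y z := ((Finset.mem_filter.mp hzU).2).2
    have hyz : y ≠ z := fun h => hznr (h ▸ Relation.ReflTransGen.refl)
    have hirr : ∀ a, ¬ R a a := fun a h => H.loopless.irrefl a (DH.dir_adj a a h)
    have hz : ∀ a, ¬ R a z := by
      intro a ha
      have hnra : ¬ Relation.ReflTransGen R y a := fun h => hznr (h.tail ha)
      have hra : H.Reachable y a := hzre.trans (DH.dir_adj a z ha).reachable.symm
      have haU : a ∈ Uf := Finset.mem_filter.mpr ⟨Finset.mem_univ a, hra, hnra⟩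
      have hsubset : Uf.filter (fun c => Relation.ReflTransGen R c a) ⊆
          Uf.filter (fun c => Relation.ReflTransGen R c z) := by
        intro c hc
        rw [Finset.mem_filter] at hc ⊢
        exact ⟨hc.1, hc.2.tail ha⟩
      have hzin : z ∈ Uf.filter (fun c => Relation.ReflTransGen R c z) :=
        Finset.mem_filter.mpr ⟨hzU, .refl⟩
      have hznotin : z ∉ Uf.filter (fun c => Relation.ReflTransGen R c a) := by
        intro hcon
        rw [Finset.mem_filter] at hcon
        exact hac.no_transGen a (Relation.TransGen.head' ha hcon.2)
      have hss := Finset.card_lt_card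
        ((Finset.ssubset_iff_of_subset hsubset).mpr ⟨z, hzin, hznotin⟩)
      exact absurd (hzmin a haU) (by omega)
    obtain ⟨DH', hdir', hac', hdf'⟩ := push DH hac hdf z hz
    refine Or.inr ⟨DH', hac', hdf', ?_⟩
    rw [hdir']
    exact potential_push_lt DH.dir_adj DH.adj_dir hirr hz hyz hzre

lemma reach_of_potential [Fintype V] {H : SimpleGraph V} (y : V) :
    ∀ (n : ℕ) (DH : Orient H), IsAcyclicRel DH.dir →
      (∀ u v, ¬ DependentArc DH.dir u v) → potential DH.dir y ≤ n →
      ∃ D' : Orient H, IsAcyclicRel D'.dir ∧ (∀ u v, ¬ DependentArc D'.dir u v) ∧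
        ∀ v, H.Reachable y v → Relation.ReflTransGen D'.dir y v := by
  intro n
  induction n with
  | zero =>
    intro DH hac hdf hpot
    rcases push_or_done y DH hac hdf with hdone | ⟨DH', hac', hdf', hlt⟩
    · exact ⟨DH, hac, hdf, hdone⟩
    · omega
  | succ m ih =>
    intro DH hac hdf hpot
    rcases push_or_done y DH hac hdf with hdone | ⟨DH', hac', hdf', hlt⟩
    · exact ⟨DH, hac, hdf, hdone⟩
    · exact ih DH' hac' hdf' (by omega)

theorem coverDeletion_eq_one_iff [Finite V] (G : SimpleGraph V) :
    coverDeletion G = 1 ↔ dmin G = 1 := by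
  classical
  cases nonempty_fintype V
  constructor
  · -- c = 1 → dmin = 1
    intro h
    rw [coverDeletion] at h
    have hneC : {n | ∃ F : Set (Sym2 V), F ⊆ G.edgeSet ∧ IsCoverGraph (G.deleteEdges F) ∧
        F.ncard = n}.Nonempty := Nat.nonempty_of_pos_sInf (by omega)
    have hmemC := Nat.sInf_mem hneC
    rw [h] at hmemC
    have h0C : (0 : ℕ) ∉ {n | ∃ F : Set (Sym2 V), F ⊆ G.edgeSet ∧
        IsCoverGraph (G.deleteEdges F) ∧ F.ncard = n} := by
      intro h0
      have := Nat.sInf_le h0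
      omega
    have h0D : (0 : ℕ) ∉ {n | ∃ D : Orient G, IsAcyclicRel D.dir ∧ numDependent D = n} := by
      rintro ⟨D₀, hac₀, hnum₀⟩
      have hempty : {p : V × V | DependentArc D₀.dir p.1 p.2} = ∅ :=
        (Set.ncard_eq_zero (Set.toFinite _)).mp hnum₀
      refine h0C ⟨∅, Set.empty_subset _, ?_, Set.ncard_empty _⟩
      rw [SimpleGraph.deleteEdges_empty]
      refine ⟨D₀, hac₀, fun u v hd => ?_⟩
      have : (u, v) ∈ {p : V × V | DependentArc D₀.dir p.1 p.2} := hd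
      rw [hempty] at this
      exact this
    obtain ⟨F, hFE, hcov, hF1⟩ := hmemC
    obtain ⟨e0, rfl⟩ := Set.ncard_eq_one.mp hF1
    have he : e0 ∈ G.edgeSet := hFE rfl
    induction e0 using Sym2.ind with
    | _ x y =>
    have hxy : G.Adj x y := (SimpleGraph.mem_edgeSet G).mp he
    obtain ⟨DH, hacH, hdfH⟩ := hcov
    have goal1 : ∃ D : Orient G, IsAcyclicRel D.dir ∧
        ∀ a b, DependentArc D.dir a b → a = x ∧ b = y := by
      by_cases hre : (G.deleteEdges {s(x, y)}).Reachable x y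
      · obtain ⟨D', hac', hdf', hall⟩ :=
          reach_of_potential x (potential DH.dir x) DH hacH hdfH le_rfl
        exact caseA hxy D' hac' hdf' (hall y hre)
      · obtain ⟨D₀, hac₀, hdf₀⟩ := caseDisc hxy DH hacH hdfH hre
        exact absurd ⟨D₀, hac₀, (Set.ncard_eq_zero (Set.toFinite _)).mpr
          (Set.eq_empty_iff_forall_notMem.mpr fun p hp => hdf₀ p.1 p.2 hp)⟩ h0D
    obtain ⟨D, hacD, hdepD⟩ := goal1
    have hsub : {p : V × V | DependentArc D.dir p.1 p.2} ⊆ {(x, y)} := by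
      intro p hp
      have := hdepD p.1 p.2 hp
      exact Set.mem_singleton_iff.mpr (Prod.ext this.1 this.2)
    have hle1 : numDependent D ≤ 1 := by
      have := Set.ncard_le_ncard hsub (Set.finite_singleton _)
      rwa [Set.ncard_singleton] at this
    have hmemD : numDependent D ∈
        {n | ∃ D : Orient G, IsAcyclicRel D.dir ∧ numDependent D = n} := ⟨D, hacD, rfl⟩
    have hpos : numDependent D ≠ 0 := fun hh => h0D (hh ▸ hmemD)
    rw [dmin]
    have hup := Nat.sInf_le hmemD
    have hlow : sInf {n | ∃ D : Orient G, IsAcyclicRel D.dir ∧ numDependent D = n} ≠ 0 :=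
      fun hh => h0D (hh ▸ Nat.sInf_mem ⟨_, hmemD⟩)
    omega
  · -- dmin = 1 → c = 1
    intro h
    rw [dmin] at h
    have hne : {n | ∃ D : Orient G, IsAcyclicRel D.dir ∧ numDependent D = n}.Nonempty :=
      Nat.nonempty_of_pos_sInf (by omega)
    have hmem := Nat.sInf_mem hne
    rw [h] at hmem
    have h0 : (0 : ℕ) ∉ {n | ∃ D : Orient G, IsAcyclicRel D.dir ∧ numDependent D = n} := by
      intro h0
      have := Nat.sInf_le h0
      omega
    obtain ⟨D, hac, hnum⟩ := hmem
    obtain ⟨p, hp⟩ := Set.ncard_eq_one.mp hnum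
    have hDuv : DependentArc D.dir p.1 p.2 := by
      have : p ∈ {q : V × V | DependentArc D.dir q.1 q.2} := by rw [hp]; rfl
      exact this
    have hAdj : G.Adj p.1 p.2 := D.dir_adj p.1 p.2 hDuv.1
    set u := p.1
    set v := p.2
    have hD' : IsCoverGraph (G.deleteEdges {s(u, v)}) := by
      refine ⟨⟨fun a b => D.dir a b ∧ s(a, b) ≠ s(u, v), ?_, ?_, ?_⟩, ?_, ?_⟩
      · rintro a b ⟨hd, hs⟩
        rw [SimpleGraph.deleteEdges_adj]
        exact ⟨D.dir_adj a b hd, by simpa using hs⟩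
      · intro a b hab
        rw [SimpleGraph.deleteEdges_adj] at hab
        obtain ⟨hGab, hns⟩ := hab
        have hns' : s(a, b) ≠ s(u, v) := by simpa using hns
        rcases D.adj_dir a b hGab with hd | hd
        · exact Or.inl ⟨hd, hns'⟩
        · exact Or.inr ⟨hd, fun hh => hns' (by rwa [Sym2.eq_swap] at hh)⟩
      · rintro a b ⟨hd, _⟩ ⟨hd', _⟩
        exact D.asymm a b hd hd'
      · rintro a b ⟨hd, _⟩ hba
        exact hac a b hd (hba.monoOld fun c d hh => hh.1)
      · rintro a b ⟨⟨hd, hsne⟩, hnacQ⟩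
        have hdep : DependentArc D.dir a b := by
          refine ⟨hd, fun hA => hnacQ ?_⟩
          intro c d hcd hdc
          have hmap : ∀ c d, reverseArc (fun a b => D.dir a b ∧ s(a, b) ≠ s(u, v)) a b c d →
              reverseArc D.dir a b c d := by
            rintro c d (⟨⟨hdd, _⟩, hne'⟩ | ⟨hc, hd2⟩)
            · exact Or.inl ⟨hdd, hne'⟩
            · exact Or.inr ⟨hc, hd2⟩
          exact hA c d (hmap c d hcd) (hdc.monoOld hmap)
        have : (a, b) ∈ {q : V × V | DependentArc D.dir q.1 q.2} := hdep
        rw [hp] at this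
        have hab : (a, b) = p := this
        apply hsne
        rw [show a = u from congrArg Prod.fst hab, show b = v from congrArg Prod.snd hab]
    have hmemC : (1 : ℕ) ∈ {n | ∃ F : Set (Sym2 V), F ⊆ G.edgeSet ∧
        IsCoverGraph (G.deleteEdges F) ∧ F.ncard = n} := by
      refine ⟨{s(u, v)}, ?_, hD', Set.ncard_singleton _⟩
      rw [Set.singleton_subset_iff, SimpleGraph.mem_edgeSet]
      exact hAdj
    have h0C : (0 : ℕ) ∉ {n | ∃ F : Set (Sym2 V), F ⊆ G.edgeSet ∧
        IsCoverGraph (G.deleteEdges F) ∧ F.ncard = n} := by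
      rintro ⟨F, hFE, hcov, hF0⟩
      have hFempty : F = ∅ := (Set.ncard_eq_zero (Set.toFinite F)).mp hF0
      rw [hFempty, SimpleGraph.deleteEdges_empty] at hcov
      obtain ⟨D₀, hac₀, hdf₀⟩ := hcov
      refine h0 ⟨D₀, hac₀, (Set.ncard_eq_zero (Set.toFinite _)).mpr
        (Set.eq_empty_iff_forall_notMem.mpr fun q hq => hdf₀ q.1 q.2 hq)⟩
    rw [coverDeletion]
    have hup := Nat.sInf_le hmemC
    have hlow : sInf {n | ∃ F : Set (Sym2 V), F ⊆ G.edgeSet ∧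
        IsCoverGraph (G.deleteEdges F) ∧ F.ncard = n} ≠ 0 :=
      fun hh => h0C (hh ▸ Nat.sInf_mem ⟨_, hmemC⟩)
    omega
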